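/- Let G be a finite group, p a prime dividing |G|, H ∈ 𝓕 a subgroup of G, and let M ≤ H be the subgroup generated by all elements of H whose order is not divisible by p. Then there exists a subgroup L of G containing H such that L/M is a p-group (so L = P ⋉ M with P a Sylow p-subgroup of the relevant Weyl group), M ⊴ L, and the number of H-fixed points |(G/L)^H| is not divisible by p. -/

import Mathlib

/-- Auxiliary: if conjugation by `g` sends the generating set `S` into `closure S`,
then it sends all of `closure S` into `closure S`. -/
lemma conj_closure_le {G : Type*} [Group G] (S : Set G) (g : G)
    (h : ∀ s ∈ S, g * s * g⁻¹ ∈ Subgroup.closure S) :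
    ∀ x ∈ Subgroup.closure S, g * x * g⁻¹ ∈ Subgroup.closure S := by
  intro x hx
  have hle : (Subgroup.closure S).map (MulAut.conj g).toMonoidHom ≤ Subgroup.closure S := by
    rw [MonoidHom.map_closure, Subgroup.closure_le]
    rintro _ ⟨s, hs, rfl⟩
    simpa [MulAut.conj_apply] using h s hs
  have h2 := hle (Subgroup.mem_map_of_mem _ hx)
  simpa [MulAut.conj_apply] using h2

/-- key lemma. -/
theorem stmt12 (G : Type*) [Group G] [Finite G] (p : ℕ) (hp : p.Prime)
    (hdvd : p ∣ Nat.card G) (H : Subgroup G)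
    (M : Subgroup G) (hM : M = Subgroup.closure {g : G | g ∈ H ∧ ¬ p ∣ orderOf g}) :
    ∃ L : Subgroup G, H ≤ L ∧ M ≤ L ∧
      ∃ hn : (M.subgroupOf L).Normal,
        @IsPGroup p (L ⧸ M.subgroupOf L) (@QuotientGroup.Quotient.group _ _ _ hn) ∧
          ¬ p ∣ Nat.card (MulAction.fixedPoints H (G ⧸ L)) := by
  haveI hf : Fact p.Prime := ⟨hp⟩
  classical
  set S : Set G := {g : G | g ∈ H ∧ ¬ p ∣ orderOf g} with hS
  have hconj : ∀ g : G, (∀ s ∈ S, g * s * g⁻¹ ∈ M) → ∀ x ∈ M, g * x * g⁻¹ ∈ M := by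
    rw [hM]; exact fun g h x hx => conj_closure_le S g h x hx
  have hSub : S ⊆ (M : Set G) := hM ▸ Subgroup.subset_closure
  have hMH : M ≤ H := by
    rw [hM]; exact (Subgroup.closure_le H).2 (fun g hg => hg.1)
  have hordconj : ∀ g s : G, orderOf (g * s * g⁻¹) = orderOf s := by
    intro g s
    simpa [MulAut.conj_apply] using (MulAut.conj g).orderOf_eq s
  have hSconj : ∀ h ∈ H, ∀ s ∈ S, h * s * h⁻¹ ∈ S := by
    intro h hh s hs
    exact ⟨H.mul_mem (H.mul_mem hh hs.1) (H.inv_mem hh), by rw [hordconj]; exact hs.2⟩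
  have hconjH : ∀ h ∈ H, ∀ x ∈ M, h * x * h⁻¹ ∈ M :=
    fun h hh => hconj h (fun s hs => hSub (hSconj h hh s hs))
  have hHN : H ≤ Subgroup.normalizer (M : Set G) := by
    intro h hh
    rw [Subgroup.mem_normalizer_iff]
    intro x
    refine ⟨fun hx => hconjH h hh x hx, fun hx => ?_⟩
    have h2 := hconjH h⁻¹ (H.inv_mem hh) _ hx
    have h3 : h⁻¹ * (h * x * h⁻¹) * h⁻¹⁻¹ = x := by group
    rwa [h3] at h2
  set N : Subgroup G := Subgroup.normalizer (M : Set G) with hN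
  set M₀ : Subgroup N := M.subgroupOf N with hM₀
  haveI hM₀n : M₀.Normal := Subgroup.normal_in_normalizer
  -- every element of `H` has a `p`-power power in `M`
  have hpow : ∀ h ∈ H, ∃ k : ℕ, h ^ p ^ k ∈ M := by
    intro h hh
    refine ⟨(orderOf h).factorization p, ?_⟩
    have h0 : orderOf h ≠ 0 := (orderOf_pos h).ne'
    apply hSub
    refine ⟨H.pow_mem hh _, ?_⟩
    have h1 : orderOf (h ^ p ^ (orderOf h).factorization p) =
        orderOf h / p ^ (orderOf h).factorization p := by
      rw [orderOf_pow, Nat.gcd_eq_right (Nat.ordProj_dvd _ _)]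
    rw [h1]
    exact Nat.not_dvd_ordCompl hp h0
  set Hb : Subgroup (N ⧸ M₀) := (H.subgroupOf N).map (QuotientGroup.mk' M₀) with hHb
  have hHbp : IsPGroup p Hb := by
    rintro ⟨x, hx⟩
    obtain ⟨n, hn, rfl⟩ := Subgroup.mem_map.mp (hHb ▸ hx)
    obtain ⟨k, hk⟩ := hpow (n : G) (Subgroup.mem_subgroupOf.mp hn)
    refine ⟨k, ?_⟩
    have hmem : (n ^ p ^ k) ∈ M₀ := by
      rw [hM₀, Subgroup.mem_subgroupOf]
      simpa using hk
    have h1 : ((QuotientGroup.mk' M₀) n) ^ p ^ k = 1 := by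
      rw [← map_pow, ← MonoidHom.mem_ker, QuotientGroup.ker_mk']
      exact hmem
    exact Subtype.ext (by simpa using h1)
  obtain ⟨P, hHP⟩ := hHbp.exists_le_sylow
  set L : Subgroup G :=
    ((P : Subgroup (N ⧸ M₀)).comap (QuotientGroup.mk' M₀)).map N.subtype with hL
  have hLN : L ≤ N := Subgroup.map_subtype_le _
  have memL : ∀ n : N, ((n : G) ∈ L ↔ (QuotientGroup.mk' M₀) n ∈ (P : Subgroup (N ⧸ M₀))) := by
    intro n
    exact (Subgroup.mem_map_iff_mem (Subgroup.subtype_injective N)).trans Iff.rfl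
  have hHL : H ≤ L := by
    intro h hh
    have hhN : h ∈ N := hHN hh
    have h1 : ((⟨h, hhN⟩ : N) : G) ∈ L := by
      rw [memL]
      exact hHP (hHb ▸ Subgroup.mem_map_of_mem _ (Subgroup.mem_subgroupOf.mpr hh))
    exact h1
  have hML : M ≤ L := by
    intro m hm
    have hmN : m ∈ N := Subgroup.le_normalizer hm
    have h1 : ((⟨m, hmN⟩ : N) : G) ∈ L := by
      rw [memL]
      have h2 : (QuotientGroup.mk' M₀) ⟨m, hmN⟩ = 1 := by
        rw [← MonoidHom.mem_ker, QuotientGroup.ker_mk']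
        exact Subgroup.mem_subgroupOf.mpr hm
      rw [h2]
      exact (P : Subgroup (N ⧸ M₀)).one_mem
    exact h1
  have hn : (M.subgroupOf L).Normal := by
    constructor
    rintro ⟨x, hxL⟩ hx ⟨g, hgL⟩
    rw [Subgroup.mem_subgroupOf] at hx ⊢
    show g * x * g⁻¹ ∈ M
    have hgN : g ∈ N := hLN hgL
    rw [hN] at hgN
    exact (Subgroup.mem_normalizer_iff.mp hgN x).mp hx
  haveI := hn
  -- the quotient L/M is a p-group
  have hpq : IsPGroup p (L ⧸ M.subgroupOf L) := by
    intro q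
    obtain ⟨l, rfl⟩ := QuotientGroup.mk_surjective q
    obtain ⟨x, hxL⟩ := l
    have hxL' : x ∈ ((P : Subgroup (N ⧸ M₀)).comap (QuotientGroup.mk' M₀)).map N.subtype := by
      rw [← hL]; exact hxL
    obtain ⟨n, hnK, hnx⟩ := Subgroup.mem_map.mp hxL'
    have hnx' : (n : G) = x := hnx
    obtain ⟨k, hk⟩ := P.2 ⟨(QuotientGroup.mk' M₀) n, Subgroup.mem_comap.mp hnK⟩
    have hk' : ((QuotientGroup.mk' M₀) n) ^ p ^ k = 1 := by
      have := congrArg Subtype.val hk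
      simpa using this
    have hxM : x ^ p ^ k ∈ M := by
      rw [← map_pow, ← MonoidHom.mem_ker, QuotientGroup.ker_mk', hM₀,
        Subgroup.mem_subgroupOf] at hk'
      rw [← hnx']
      simpa using hk'
    refine ⟨k, ?_⟩
    show ((QuotientGroup.mk' (M.subgroupOf L)) (⟨x, hxL⟩ : L)) ^ p ^ k = 1
    rw [← map_pow, ← MonoidHom.mem_ker, QuotientGroup.ker_mk', Subgroup.mem_subgroupOf]
    simpa using hxM
  -- elements of L of order prime to p lie in M
  have hLp' : ∀ x : G, x ∈ L → ¬ p ∣ orderOf x → x ∈ M := by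
    intro x hxL hord
    have hxL' : x ∈ ((P : Subgroup (N ⧸ M₀)).comap (QuotientGroup.mk' M₀)).map N.subtype := by
      rw [← hL]; exact hxL
    obtain ⟨n, hnK, hnx⟩ := Subgroup.mem_map.mp hxL'
    have hnx' : (n : G) = x := hnx
    have hnP : (QuotientGroup.mk' M₀) n ∈ (P : Subgroup (N ⧸ M₀)) := Subgroup.mem_comap.mp hnK
    have hd1 : orderOf ((QuotientGroup.mk' M₀) n) ∣ orderOf n := orderOf_map_dvd _ _
    have hordeq : orderOf x = orderOf n := by
      rw [← hnx']
      exact orderOf_injective N.subtype (Subgroup.subtype_injective N) n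
    have hdx : orderOf ((QuotientGroup.mk' M₀) n) ∣ orderOf x := by
      rw [hordeq]; exact hd1
    obtain ⟨k, hk⟩ := P.2 ⟨_, hnP⟩
    have hk' : ((QuotientGroup.mk' M₀) n) ^ p ^ k = 1 := by
      have := congrArg Subtype.val hk
      simpa using this
    have hdpk : orderOf ((QuotientGroup.mk' M₀) n) ∣ p ^ k := orderOf_dvd_of_pow_eq_one hk'
    have hpd : ¬ p ∣ orderOf ((QuotientGroup.mk' M₀) n) := fun hdd => hord (hdd.trans hdx)
    have hco : Nat.Coprime (orderOf ((QuotientGroup.mk' M₀) n)) (p ^ k) :=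
      Nat.Coprime.pow_right k ((hp.coprime_iff_not_dvd.mpr hpd).symm)
    have hd1' : orderOf ((QuotientGroup.mk' M₀) n) = 1 := hco.eq_one_of_dvd hdpk
    have hone : (QuotientGroup.mk' M₀) n = 1 := orderOf_eq_one_iff.mp hd1'
    have hnM₀ : n ∈ M₀ := by
      have h2 : n ∈ (QuotientGroup.mk' M₀).ker := MonoidHom.mem_ker.mpr hone
      rwa [QuotientGroup.ker_mk'] at h2
    rw [hM₀, Subgroup.mem_subgroupOf] at hnM₀
    rwa [hnx'] at hnM₀
  -- smul computation on the quotient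
  have hsmul : ∀ (h : H) (g : G),
      (h • (QuotientGroup.mk g : G ⧸ L) : G ⧸ L) = QuotientGroup.mk ((h : G) * g) := by
    intro h g; rfl
  -- characterization of fixed points
  have hfix : ∀ g : G, ((QuotientGroup.mk g : G ⧸ L) ∈ MulAction.fixedPoints H (G ⧸ L)) ↔
      ∀ h ∈ H, g⁻¹ * h * g ∈ L := by
    intro g
    rw [MulAction.mem_fixedPoints]
    constructor
    · intro hg h hh
      have h1 := hg ⟨h⁻¹, H.inv_mem hh⟩
      rw [hsmul] at h1
      have h2 := QuotientGroup.eq.mp h1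
      have h3 : ((h⁻¹ : G) * g)⁻¹ * g = g⁻¹ * h * g := by group
      rwa [h3] at h2
    · rintro hc ⟨h, hh⟩
      rw [hsmul, QuotientGroup.eq]
      have h3 : (h * g)⁻¹ * g = g⁻¹ * h⁻¹ * g := by group
      rw [h3]
      exact hc h⁻¹ (H.inv_mem hh)
  -- representatives of fixed points normalize M
  have hrep0 : ∀ g : G, ((QuotientGroup.mk g : G ⧸ L) ∈ MulAction.fixedPoints H (G ⧸ L)) →
      g ∈ N := by
    intro g hg
    have hc := (hfix g).mp hg
    have hMle : ∀ x ∈ M, g⁻¹ * x * g⁻¹⁻¹ ∈ M := by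
      apply hconj
      intro s hs
      rw [inv_inv]
      apply hLp' _ (hc s hs.1)
      have h4 : g⁻¹ * s * g = g⁻¹ * s * g⁻¹⁻¹ := by rw [inv_inv]
      rw [h4, hordconj]
      exact hs.2
    have hKle : M.map (MulAut.conj g⁻¹).toMonoidHom ≤ M := by
      intro y hy
      obtain ⟨x, hx, rfl⟩ := Subgroup.mem_map.mp hy
      simpa [MulAut.conj_apply] using hMle x hx
    have hcard : Nat.card (M.map (MulAut.conj g⁻¹).toMonoidHom) = Nat.card M :=
      (Nat.card_congr (Subgroup.equivMapOfInjective M _ ((MulAut.conj g⁻¹).injective)).toEquiv).symm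
    have hKeq : M.map (MulAut.conj g⁻¹).toMonoidHom = M :=
      Subgroup.eq_of_le_of_card_ge hKle hcard.ge
    rw [hN, Subgroup.mem_normalizer_iff'']
    intro x
    constructor
    · intro hx
      have h5 : (MulAut.conj g⁻¹).toMonoidHom x ∈ M.map (MulAut.conj g⁻¹).toMonoidHom :=
        Subgroup.mem_map_of_mem _ hx
      rw [hKeq] at h5
      simpa [MulAut.conj_apply, mul_assoc] using h5
    · intro hx
      rw [← hKeq] at hx
      obtain ⟨y, hy, hxy⟩ := Subgroup.mem_map.mp hx
      have h5 : (MulAut.conj g⁻¹).toMonoidHom y = g⁻¹ * y * g := by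
        simp [MulAut.conj_apply]
      rw [h5] at hxy
      have h6 : y = x := mul_left_cancel (mul_right_cancel hxy)
      rwa [h6] at hy
  -- key coset correspondence
  have hcoset : ∀ n m : N,
      ((QuotientGroup.mk ((QuotientGroup.mk' M₀) n) :
          (N ⧸ M₀) ⧸ (P : Subgroup (N ⧸ M₀))) = QuotientGroup.mk ((QuotientGroup.mk' M₀) m)) ↔
        ((QuotientGroup.mk (n : G) : G ⧸ L) = QuotientGroup.mk (m : G)) := by
    intro n m
    rw [QuotientGroup.eq, QuotientGroup.eq, ← map_inv, ← map_mul,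
      show (n : G)⁻¹ * (m : G) = ((n⁻¹ * m : N) : G) from rfl, memL]
  -- smul computation for Hb
  have hsmul2 : ∀ (w : Hb) (u : N ⧸ M₀),
      (w • (QuotientGroup.mk u : (N ⧸ M₀) ⧸ (P : Subgroup (N ⧸ M₀)))) =
        QuotientGroup.mk ((w : N ⧸ M₀) * u) := by
    intro w u; rfl
  -- the representative map
  let rep : MulAction.fixedPoints H (G ⧸ L) → N := fun x =>
    ⟨Quotient.out x.1, hrep0 _ (by rw [QuotientGroup.out_eq']; exact x.2)⟩
  have hrepmk : ∀ x : MulAction.fixedPoints H (G ⧸ L),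
      (QuotientGroup.mk ((rep x : N) : G) : G ⧸ L) = x.1 := fun x => QuotientGroup.out_eq' x.1
  have hfwd : ∀ x : MulAction.fixedPoints H (G ⧸ L),
      (QuotientGroup.mk ((QuotientGroup.mk' M₀) (rep x)) :
        (N ⧸ M₀) ⧸ (P : Subgroup (N ⧸ M₀))) ∈
        MulAction.fixedPoints Hb ((N ⧸ M₀) ⧸ (P : Subgroup (N ⧸ M₀))) := by
    intro x
    rw [MulAction.mem_fixedPoints]
    rintro ⟨w, hw⟩
    obtain ⟨nh, hnh, rfl⟩ := Subgroup.mem_map.mp (hHb ▸ hw)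
    rw [hsmul2]
    show (QuotientGroup.mk ((QuotientGroup.mk' M₀) nh * (QuotientGroup.mk' M₀) (rep x)) :
      (N ⧸ M₀) ⧸ (P : Subgroup (N ⧸ M₀))) = _
    rw [← map_mul, hcoset]
    have hfixx := (hfix ((rep x : N) : G)).mp (by rw [hrepmk x]; exact x.2)
    rw [QuotientGroup.eq]
    have h7 : (((nh * rep x : N) : G))⁻¹ * ((rep x : N) : G) =
        ((rep x : N) : G)⁻¹ * ((nh : N) : G)⁻¹ * ((rep x : N) : G) := by
      push_cast
      group
    rw [h7]
    exact hfixx _ (H.inv_mem (Subgroup.mem_subgroupOf.mp hnh))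
  have main : Nat.card (MulAction.fixedPoints H (G ⧸ L)) =
      Nat.card (MulAction.fixedPoints Hb ((N ⧸ M₀) ⧸ (P : Subgroup (N ⧸ M₀)))) := by
    refine Nat.card_eq_of_bijective (fun x => ⟨_, hfwd x⟩) ⟨?_, ?_⟩
    · intro x y hxy
      have h8 := congrArg Subtype.val hxy
      simp only at h8
      rw [hcoset, hrepmk x, hrepmk y] at h8
      exact Subtype.ext h8
    · intro y
      set w : N ⧸ M₀ := Quotient.out y.1 with hw
      set n : N := Quotient.out w with hwn
      have hmkn : (QuotientGroup.mk' M₀) n = w := QuotientGroup.out_eq' w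
      have hxfix : (QuotientGroup.mk (n : G) : G ⧸ L) ∈ MulAction.fixedPoints H (G ⧸ L) := by
        rw [hfix]
        intro h hh
        have hhN : h⁻¹ ∈ N := hHN (H.inv_mem hh)
        have h9 := (MulAction.mem_fixedPoints.mp y.2)
          (⟨(QuotientGroup.mk' M₀) ⟨h⁻¹, hhN⟩,
            hHb ▸ Subgroup.mem_map_of_mem _ (Subgroup.mem_subgroupOf.mpr (H.inv_mem hh))⟩ : Hb)
        have hy1 : (QuotientGroup.mk w : (N ⧸ M₀) ⧸ (P : Subgroup (N ⧸ M₀))) = y.1 :=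
          QuotientGroup.out_eq' y.1
        rw [← hy1, hsmul2] at h9
        rw [show ((⟨(QuotientGroup.mk' M₀) ⟨h⁻¹, hhN⟩, _⟩ : Hb) : N ⧸ M₀) =
          (QuotientGroup.mk' M₀) ⟨h⁻¹, hhN⟩ from rfl, ← hmkn, ← map_mul, hcoset,
          QuotientGroup.eq] at h9
        have h10 : (((⟨h⁻¹, hhN⟩ * n : N) : G))⁻¹ * ((n : N) : G) =
            (n : G)⁻¹ * h * (n : G) := by
          push_cast
          group
        rwa [h10] at h9
      refine ⟨⟨QuotientGroup.mk (n : G), hxfix⟩, ?_⟩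
      apply Subtype.ext
      show (QuotientGroup.mk ((QuotientGroup.mk' M₀)
        (rep ⟨QuotientGroup.mk (n : G), hxfix⟩)) : (N ⧸ M₀) ⧸ (P : Subgroup (N ⧸ M₀))) = y.1
      have h11 : (QuotientGroup.mk ((rep ⟨QuotientGroup.mk (n : G), hxfix⟩ : N) : G) : G ⧸ L) =
          QuotientGroup.mk (n : G) := hrepmk _
      calc (QuotientGroup.mk ((QuotientGroup.mk' M₀)
            (rep ⟨QuotientGroup.mk (n : G), hxfix⟩)) : (N ⧸ M₀) ⧸ (P : Subgroup (N ⧸ M₀)))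
          = QuotientGroup.mk ((QuotientGroup.mk' M₀) n) := (hcoset _ n).mpr h11
        _ = QuotientGroup.mk w := by rw [hmkn]
        _ = y.1 := QuotientGroup.out_eq' y.1
  refine ⟨L, hHL, hML, hn, hpq, ?_⟩
  intro hdvdF
  rw [main] at hdvdF
  have hmod := hHbp.card_modEq_card_fixedPoints ((N ⧸ M₀) ⧸ (P : Subgroup (N ⧸ M₀)))
  have hdvdW : p ∣ Nat.card ((N ⧸ M₀) ⧸ (P : Subgroup (N ⧸ M₀))) :=
    Nat.modEq_zero_iff_dvd.mp (hmod.trans (Nat.modEq_zero_iff_dvd.mpr hdvdF))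
  haveI : Finite (Sylow p (N ⧸ M₀)) :=
    Finite.of_injective (fun Q : Sylow p (N ⧸ M₀) => (Q : Subgroup (N ⧸ M₀)))
      (fun a b hab => by cases a; cases b; simpa using hab)
  have hnd := Sylow.not_dvd_index P
  exact hnd (by rwa [Subgroup.index_eq_card])
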